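/- For the sequences c and s above, for all n ≥ 1 and p ≥ 0: det Σ_{3n}^{3p} = (−1)^n · (det Σ_n^p)² · det H_n^{p+1}, and det Σ_{3n+1}^{3p} = (−1)^{n+1} · J² · det H_{n+1}^p · det Σ_n^p · det Σ_n^{p+1}. -/

import Mathlib

open Matrix

noncomputable def Hmat (u : ℕ → ℂ) (p n : ℕ) : Matrix (Fin n) (Fin n) ℂ :=
  Matrix.of fun i j => u (p + i + j)

lemma fromColumns_add' {m n₁ n₂ : Type*} (A₁ B₁ : Matrix m n₁ ℂ) (A₂ B₂ : Matrix m n₂ ℂ) :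
    fromCols A₁ A₂ + fromCols B₁ B₂ = fromCols (A₁ + B₁) (A₂ + B₂) := by
  ext i (j|j) <;> simp

lemma fromRows_add' {m₁ m₂ n : Type*} (A₁ B₁ : Matrix m₁ n ℂ) (A₂ B₂ : Matrix m₂ n ℂ) :
    fromRows A₁ A₂ + fromRows B₁ B₂ = fromRows (A₁ + B₁) (A₂ + B₂) := by
  ext (i|i) j <;> simp

lemma key1 (J : ℂ) (hJ2 : J^2 + J + 1 = 0) (hJ3 : J^3 = 1)
    (c s : ℕ → ℂ) (hs : ∀ k, s k = c k + c (k+1))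
    (hs0 : ∀ k, s (3*k) = (1+J) * c k)
    (hs1 : ∀ k, s (3*k+1) = J * c k)
    (hs2 : ∀ k, s (3*k+2) = c (k+1))
    (n p : ℕ) :
    (Hmat s (3*p) (3*n)).det = (-1)^n * (Hmat s p n).det^2 * (Hmat c (p+1) n).det := by
  classical
  set f : (Fin n ⊕ (Fin n ⊕ Fin n)) → Fin (3*n) :=
    Sum.elim (fun a => ⟨3*(a:ℕ), by have := a.isLt; omega⟩)
      (Sum.elim (fun a => ⟨3*(a:ℕ)+1, by have := a.isLt; omega⟩)
        (fun a => ⟨3*(a:ℕ)+2, by have := a.isLt; omega⟩)) with hf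
  have hbij : Function.Bijective f := by
    rw [Fintype.bijective_iff_injective_and_card]
    constructor
    · rintro (a|a|a) (b|b|b) h <;>
        simp only [hf, Sum.elim_inl, Sum.elim_inr, Fin.mk.injEq] at h <;>
        simp_all [Fin.ext_iff] <;> omega
    · simp; omega
  set e := Equiv.ofBijective f hbij with he
  set C : Matrix (Fin n) (Fin n) ℂ := Hmat c p n with hC
  set C' : Matrix (Fin n) (Fin n) ℂ := Hmat c (p+1) n with hC'
  set S : Matrix (Fin n) (Fin n) ℂ := Hmat s p n with hS
  have hMb : (Hmat s (3*p) (3*n)).submatrix e e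
      = fromBlocks ((1+J)•C) (fromCols (J•C) C') (fromRows (J•C) C')
          (fromBlocks C' ((1+J)•C') ((1+J)•C') (J•C')) := by
    ext (a|a|a) (b|b|b) <;>
      simp only [submatrix_apply, he, Equiv.ofBijective_apply, hf, Sum.elim_inl, Sum.elim_inr,
        fromBlocks_apply₁₁, fromBlocks_apply₁₂, fromBlocks_apply₂₁, fromBlocks_apply₂₂,
        fromCols_apply_inl, fromCols_apply_inr, fromRows_apply_inl, fromRows_apply_inr,
        Matrix.smul_apply, smul_eq_mul, hC, hC', Hmat, of_apply]
    · rw [show 3*p + 3*(a:ℕ) + 3*(b:ℕ) = 3*(p+(a:ℕ)+(b:ℕ)) by ring, hs0]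
    · rw [show 3*p + 3*(a:ℕ) + (3*(b:ℕ)+1) = 3*(p+(a:ℕ)+(b:ℕ))+1 by ring, hs1]
    · rw [show 3*p + 3*(a:ℕ) + (3*(b:ℕ)+2) = 3*(p+(a:ℕ)+(b:ℕ))+2 by ring, hs2,
        show p+(a:ℕ)+(b:ℕ)+1 = p+1+(a:ℕ)+(b:ℕ) by ring]
    · rw [show 3*p + (3*(a:ℕ)+1) + 3*(b:ℕ) = 3*(p+(a:ℕ)+(b:ℕ))+1 by ring, hs1]
    · rw [show 3*p + (3*(a:ℕ)+1) + (3*(b:ℕ)+1) = 3*(p+(a:ℕ)+(b:ℕ))+2 by ring, hs2,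
        show p+(a:ℕ)+(b:ℕ)+1 = p+1+(a:ℕ)+(b:ℕ) by ring]
    · rw [show 3*p + (3*(a:ℕ)+1) + (3*(b:ℕ)+2) = 3*(p+(a:ℕ)+(b:ℕ)+1) by ring, hs0,
        show p+(a:ℕ)+(b:ℕ)+1 = p+1+(a:ℕ)+(b:ℕ) by ring]
    · rw [show 3*p + (3*(a:ℕ)+2) + 3*(b:ℕ) = 3*(p+(a:ℕ)+(b:ℕ))+2 by ring, hs2,
        show p+(a:ℕ)+(b:ℕ)+1 = p+1+(a:ℕ)+(b:ℕ) by ring]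
    · rw [show 3*p + (3*(a:ℕ)+2) + (3*(b:ℕ)+1) = 3*(p+(a:ℕ)+(b:ℕ)+1) by ring, hs0,
        show p+(a:ℕ)+(b:ℕ)+1 = p+1+(a:ℕ)+(b:ℕ) by ring]
    · rw [show 3*p + (3*(a:ℕ)+2) + (3*(b:ℕ)+2) = 3*(p+(a:ℕ)+(b:ℕ)+1)+1 by ring, hs1,
        show p+(a:ℕ)+(b:ℕ)+1 = p+1+(a:ℕ)+(b:ℕ) by ring]
  set I1 : Matrix (Fin n) (Fin n) ℂ := 1 with hI1
  set R₁ := fromBlocks I1 0 (fromRows (J•I1) 0) (fromBlocks I1 0 (J•I1) I1) with hR₁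
  set L₁ := fromBlocks I1 (fromCols I1 0) 0 (1 : Matrix (Fin n ⊕ Fin n) (Fin n ⊕ Fin n) ℂ) with hL₁
  set L₂ := fromBlocks I1 0 (fromRows (-I1) 0) (1 : Matrix (Fin n ⊕ Fin n) (Fin n ⊕ Fin n) ℂ) with hL₂
  set M₁ := fromBlocks 0 (fromCols (J•S) C') (fromRows (J•S) 0)
      (fromBlocks 0 ((1+J)•C') 0 (J•C')) with hM₁
  set M₂ := fromBlocks (J•S) (fromCols (J•S) ((2+J)•C')) (fromRows (J•S) 0)
      (fromBlocks 0 ((1+J)•C') 0 (J•C')) with hM₂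
  set T := fromBlocks (J•S) (fromCols (J•S) ((2+J)•C')) 0
      (fromBlocks ((-J)•S) (-C') 0 (J•C')) with hT
  have hCS : J•C + J•C' = J•S := by
    ext i j
    simp only [hC, hC', hS, Hmat, Matrix.add_apply, Matrix.smul_apply, of_apply, smul_eq_mul, hs,
      show p+1+(i:ℕ)+(j:ℕ) = p+(i:ℕ)+(j:ℕ)+1 by ring]
    ring
  have hzC : ((1+J))•C + (J*J)•C = 0 := by
    rw [← add_smul, show (1+J) + J*J = 0 by linear_combination hJ2, zero_smul]
  have hzC' : C' + (J*(1+J))•C' = 0 := by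
    nth_rewrite 1 [← one_smul ℂ C']
    rw [← add_smul, show (1:ℂ) + J*(1+J) = 0 by linear_combination hJ2, zero_smul]
  have hzC'2 : ((1+J))•C' + (J*J)•C' = 0 := by
    rw [← add_smul, show (1+J) + J*J = 0 by linear_combination hJ2, zero_smul]
  have h1 : (Hmat s (3*p) (3*n)).submatrix e e * R₁ = M₁ := by
    rw [hMb, hR₁, fromBlocks_multiply]
    rw [fromCols_mul_fromRows, fromCols_mul_fromBlocks, fromBlocks_mul_fromRows,
      fromBlocks_multiply]
    simp only [Matrix.mul_one, Matrix.mul_zero, Matrix.zero_mul, Matrix.one_mul, add_zero,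
      zero_add, Matrix.mul_smul, Matrix.smul_mul, smul_smul, hM₁, hI1, fromRows_add']
    rw [hCS]
    simp only [hzC, hzC', hzC'2]
  have hzC'3 : C' + (1+J)•C' = (2+J)•C' := by
    nth_rewrite 1 [← one_smul ℂ C']
    rw [← add_smul, show (1:ℂ)+(1+J) = 2+J by ring]
  have h2 : L₁ * M₁ = M₂ := by
    rw [hL₁, hM₁, fromBlocks_multiply]
    rw [fromCols_mul_fromRows, fromCols_mul_fromBlocks]
    simp only [Matrix.mul_one, Matrix.mul_zero, Matrix.zero_mul, Matrix.one_mul, add_zero,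
      zero_add, hI1, fromColumns_add', hzC'3, hM₂]
  have h3 : L₂ * M₂ = T := by
    rw [hL₂, hM₂, fromBlocks_multiply]
    rw [fromRows_mul, fromRows_mul_fromCols]
    simp only [Matrix.mul_one, Matrix.mul_zero, Matrix.zero_mul, Matrix.one_mul, add_zero,
      zero_add, hI1, Matrix.neg_mul, fromRows_add', fromBlocks_add, neg_add_cancel, fromRows_zero,
      hT, ← neg_smul, zero_smul]
    rw [← add_smul, show (-J + J : ℂ) = 0 by ring, zero_smul, fromRows_zero, ← add_smul,
      show -(2+J) + (1+J) = (-1:ℂ) by ring, neg_one_smul]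
  have hdR : R₁.det = 1 := by
    rw [hR₁, det_fromBlocks_zero₁₂, det_fromBlocks_zero₁₂, hI1, det_one]
    norm_num
  have hdL₁ : L₁.det = 1 := by
    rw [hL₁, det_fromBlocks_zero₂₁, hI1, det_one, det_one]
    norm_num
  have hdL₂ : L₂.det = 1 := by
    rw [hL₂, det_fromBlocks_zero₁₂, hI1, det_one, det_one]
    norm_num
  have hdT : T.det = (-1:ℂ)^n * S.det^2 * C'.det := by
    rw [hT, det_fromBlocks_zero₂₁, det_fromBlocks_zero₂₁, det_smul, det_smul, det_smul,
      Fintype.card_fin]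
    have h : ((J:ℂ)^n)^3 = 1 := by
      rw [← pow_mul, mul_comm, pow_mul, hJ3, one_pow]
    rw [neg_pow]
    linear_combination ((-1:ℂ))^n * S.det^2 * C'.det * h
  have hsub : ((Hmat s (3*p) (3*n)).submatrix e e).det = T.det := by
    calc ((Hmat s (3*p) (3*n)).submatrix e e).det
        = ((Hmat s (3*p) (3*n)).submatrix e e).det * R₁.det := by rw [hdR, mul_one]
      _ = M₁.det := by rw [← det_mul, h1]
      _ = L₁.det * M₁.det := by rw [hdL₁, one_mul]
      _ = M₂.det := by rw [← det_mul, h2]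
      _ = L₂.det * M₂.det := by rw [hdL₂, one_mul]
      _ = T.det := by rw [← det_mul, h3]
  rw [← det_submatrix_equiv_self e (Hmat s (3*p) (3*n)), hsub, hdT]

lemma key2 (J : ℂ) (hJ2 : J^2 + J + 1 = 0) (hJ3 : J^3 = 1)
    (c s : ℕ → ℂ) (hs : ∀ k, s k = c k + c (k+1))
    (hs0 : ∀ k, s (3*k) = (1+J) * c k)
    (hs1 : ∀ k, s (3*k+1) = J * c k)
    (hs2 : ∀ k, s (3*k+2) = c (k+1))
    (n p : ℕ) :
    (Hmat s (3*p) (3*n+1)).det =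
      (-1)^(n+1) * J^2 * (Hmat c p (n+1)).det * (Hmat s p n).det * (Hmat s (p+1) n).det := by
  classical
  set f : (Fin (n+1) ⊕ (Fin n ⊕ Fin n)) → Fin (3*n+1) :=
    Sum.elim (fun a => ⟨3*(a:ℕ), by have := a.isLt; omega⟩)
      (Sum.elim (fun a => ⟨3*(a:ℕ)+1, by have := a.isLt; omega⟩)
        (fun a => ⟨3*(a:ℕ)+2, by have := a.isLt; omega⟩)) with hf
  have hbij : Function.Bijective f := by
    rw [Fintype.bijective_iff_injective_and_card]
    constructor
    · rintro (a|a|a) (b|b|b) h <;>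
        simp only [hf, Sum.elim_inl, Sum.elim_inr, Fin.mk.injEq] at h <;>
        simp_all [Fin.ext_iff] <;> omega
    · simp; omega
  set e := Equiv.ofBijective f hbij with he
  set A : Matrix (Fin (n+1)) (Fin (n+1)) ℂ := Hmat c p (n+1) with hA
  set B₁ : Matrix (Fin (n+1)) (Fin n) ℂ := of fun i j => c (p+(i:ℕ)+(j:ℕ)) with hB₁
  set B₁' : Matrix (Fin (n+1)) (Fin n) ℂ := of fun i j => c (p+1+(i:ℕ)+(j:ℕ)) with hB₁'
  set Bt : Matrix (Fin n) (Fin (n+1)) ℂ := of fun i j => c (p+(i:ℕ)+(j:ℕ)) with hBt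
  set G : Matrix (Fin n) (Fin (n+1)) ℂ := of fun i j => c (p+1+(i:ℕ)+(j:ℕ)) with hG
  set C₀ : Matrix (Fin n) (Fin n) ℂ := Hmat c p n with hC₀
  set E₀ : Matrix (Fin n) (Fin n) ℂ := Hmat c (p+1) n with hE₀
  set E₁ : Matrix (Fin n) (Fin n) ℂ := Hmat c (p+2) n with hE₁
  set S : Matrix (Fin n) (Fin n) ℂ := Hmat s p n with hS
  set S' : Matrix (Fin n) (Fin n) ℂ := Hmat s (p+1) n with hS'
  set P : Matrix (Fin n) (Fin (n+1)) ℂ := of fun i j => if j = i.castSucc then 1 else 0 with hP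
  set Q : Matrix (Fin n) (Fin (n+1)) ℂ := of fun i j => if j = i.succ then 1 else 0 with hQ
  have hMb : (Hmat s (3*p) (3*n+1)).submatrix e e
      = fromBlocks ((1+J)•A) (fromCols (J•B₁) B₁') (fromRows (J•Bt) G)
          (fromBlocks E₀ ((1+J)•E₀) ((1+J)•E₀) (J•E₀)) := by
    ext (a|a|a) (b|b|b) <;>
      simp only [submatrix_apply, he, Equiv.ofBijective_apply, hf, Sum.elim_inl, Sum.elim_inr,
        fromBlocks_apply₁₁, fromBlocks_apply₁₂, fromBlocks_apply₂₁, fromBlocks_apply₂₂,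
        fromCols_apply_inl, fromCols_apply_inr, fromRows_apply_inl, fromRows_apply_inr,
        Matrix.smul_apply, smul_eq_mul, hA, hB₁, hB₁', hBt, hG, hE₀, Hmat, of_apply]
    · rw [show 3*p + 3*(a:ℕ) + 3*(b:ℕ) = 3*(p+(a:ℕ)+(b:ℕ)) by ring, hs0]
    · rw [show 3*p + 3*(a:ℕ) + (3*(b:ℕ)+1) = 3*(p+(a:ℕ)+(b:ℕ))+1 by ring, hs1]
    · rw [show 3*p + 3*(a:ℕ) + (3*(b:ℕ)+2) = 3*(p+(a:ℕ)+(b:ℕ))+2 by ring, hs2,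
        show p+(a:ℕ)+(b:ℕ)+1 = p+1+(a:ℕ)+(b:ℕ) by ring]
    · rw [show 3*p + (3*(a:ℕ)+1) + 3*(b:ℕ) = 3*(p+(a:ℕ)+(b:ℕ))+1 by ring, hs1]
    · rw [show 3*p + (3*(a:ℕ)+1) + (3*(b:ℕ)+1) = 3*(p+(a:ℕ)+(b:ℕ))+2 by ring, hs2,
        show p+(a:ℕ)+(b:ℕ)+1 = p+1+(a:ℕ)+(b:ℕ) by ring]
    · rw [show 3*p + (3*(a:ℕ)+1) + (3*(b:ℕ)+2) = 3*(p+(a:ℕ)+(b:ℕ)+1) by ring, hs0,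
        show p+(a:ℕ)+(b:ℕ)+1 = p+1+(a:ℕ)+(b:ℕ) by ring]
    · rw [show 3*p + (3*(a:ℕ)+2) + 3*(b:ℕ) = 3*(p+(a:ℕ)+(b:ℕ))+2 by ring, hs2,
        show p+(a:ℕ)+(b:ℕ)+1 = p+1+(a:ℕ)+(b:ℕ) by ring]
    · rw [show 3*p + (3*(a:ℕ)+2) + (3*(b:ℕ)+1) = 3*(p+(a:ℕ)+(b:ℕ)+1) by ring, hs0,
        show p+(a:ℕ)+(b:ℕ)+1 = p+1+(a:ℕ)+(b:ℕ) by ring]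
    · rw [show 3*p + (3*(a:ℕ)+2) + (3*(b:ℕ)+2) = 3*(p+(a:ℕ)+(b:ℕ)+1)+1 by ring, hs1,
        show p+(a:ℕ)+(b:ℕ)+1 = p+1+(a:ℕ)+(b:ℕ) by ring]
  have hPA : P * A = Bt := by
    ext i j
    simp [hP, hA, hBt, Matrix.mul_apply, ite_mul, one_mul, zero_mul,
      Finset.sum_ite_eq', Hmat]
  have hQA : Q * A = G := by
    ext i j
    simp only [hQ, hA, hG, Matrix.mul_apply, of_apply, ite_mul, one_mul, zero_mul,
      Finset.sum_ite_eq', Finset.mem_univ, if_true, Hmat, Fin.val_succ]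
    rw [show p+((i:ℕ)+1)+(j:ℕ) = p+1+(i:ℕ)+(j:ℕ) by ring]
  have hPB₁ : P * B₁ = C₀ := by
    ext i j
    simp [hP, hB₁, hC₀, Matrix.mul_apply, ite_mul, one_mul, zero_mul,
      Finset.sum_ite_eq', Hmat]
  have hPB₁' : P * B₁' = E₀ := by
    ext i j
    simp [hP, hB₁', hE₀, Matrix.mul_apply, ite_mul, one_mul, zero_mul,
      Finset.sum_ite_eq', Hmat]
  have hQB₁ : Q * B₁ = E₀ := by
    ext i j
    simp only [hQ, hB₁, hE₀, Matrix.mul_apply, of_apply, ite_mul, one_mul, zero_mul,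
      Finset.sum_ite_eq', Finset.mem_univ, if_true, Hmat, Fin.val_succ]
    rw [show p+((i:ℕ)+1)+(j:ℕ) = p+1+(i:ℕ)+(j:ℕ) by ring]
  have hQB₁' : Q * B₁' = E₁ := by
    ext i j
    simp only [hQ, hB₁', hE₁, Matrix.mul_apply, of_apply, ite_mul, one_mul, zero_mul,
      Finset.sum_ite_eq', Finset.mem_univ, if_true, Hmat, Fin.val_succ]
    rw [show p+1+((i:ℕ)+1)+(j:ℕ) = p+2+(i:ℕ)+(j:ℕ) by ring]
  set L := fromBlocks (1 : Matrix (Fin (n+1)) (Fin (n+1)) ℂ) 0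
      (fromRows ((J^2)•P) (J•Q)) (1 : Matrix (Fin n ⊕ Fin n) (Fin n ⊕ Fin n) ℂ) with hL
  set T := fromBlocks ((1+J)•A) (fromCols (J•B₁) B₁') 0
      (fromBlocks S 0 0 (J•S')) with hT
  have hz1 : ((1+J)*J^2)•Bt + J•Bt = 0 := by
    rw [← add_smul, show (1+J)*J^2 + J = 0 by linear_combination hJ2 + hJ3, zero_smul]
  have hz2 : ((1+J)*J)•G + G = 0 := by
    nth_rewrite 2 [← one_smul ℂ G]
    rw [← add_smul, show (1+J)*J + 1 = 0 by linear_combination hJ2, zero_smul]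
  have hz3 : (J*J^2)•C₀ + E₀ = S := by
    ext i j
    simp only [Matrix.add_apply, Matrix.smul_apply, smul_eq_mul, hC₀, hE₀, hS, Hmat, of_apply, hs,
      show p+1+(i:ℕ)+(j:ℕ) = p+(i:ℕ)+(j:ℕ)+1 by ring]
    linear_combination c (p+(i:ℕ)+(j:ℕ)) * hJ3
  have hz4 : (J^2)•E₀ + (1+J)•E₀ = 0 := by
    rw [← add_smul, show J^2 + (1+J) = 0 by linear_combination hJ2, zero_smul]
  have hz5 : (J*J)•E₀ + (1+J)•E₀ = 0 := by
    rw [← add_smul, show J*J + (1+J) = 0 by linear_combination hJ2, zero_smul]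
  have hz6 : J•E₁ + J•E₀ = J•S' := by
    ext i j
    simp only [Matrix.add_apply, Matrix.smul_apply, smul_eq_mul, hE₁, hE₀, hS', Hmat, of_apply, hs,
      show p+2+(i:ℕ)+(j:ℕ) = p+1+(i:ℕ)+(j:ℕ)+1 by ring]
    ring
  have hstep : L * ((Hmat s (3*p) (3*n+1)).submatrix e e) = T := by
    rw [hMb, hL, fromBlocks_multiply, fromRows_mul, fromRows_mul_fromCols]
    simp only [Matrix.mul_one, Matrix.mul_zero, Matrix.zero_mul, Matrix.one_mul, add_zero,
      zero_add, Matrix.mul_smul, Matrix.smul_mul, smul_smul, hPA, hQA, hPB₁, hPB₁', hQB₁,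
      hQB₁', fromRows_add', fromBlocks_add, hz1, hz2, hz3, hz4, hz5, hz6, fromRows_zero, hT]
  have hdL : L.det = 1 := by
    rw [hL, det_fromBlocks_zero₁₂, det_one, det_one]
    norm_num
  have hdT : T.det = (-1:ℂ)^(n+1) * J^2 * A.det * S.det * S'.det := by
    rw [hT, det_fromBlocks_zero₂₁, det_fromBlocks_zero₂₁, det_smul, det_smul]
    simp only [Fintype.card_fin]
    have h1J : (1+J) = -J^2 := by linear_combination hJ2
    have hpow : ((J:ℂ)^2)^(n+1) * J^n = J^2 := by
      rw [← pow_mul, ← pow_add, show 2*(n+1)+n = 3*n+2 by ring, pow_add, pow_mul, hJ3,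
        one_pow, one_mul]
    rw [h1J, neg_pow]
    linear_combination ((-1:ℂ))^(n+1) * A.det * S.det * S'.det * hpow
  have hsub : ((Hmat s (3*p) (3*n+1)).submatrix e e).det = T.det := by
    calc ((Hmat s (3*p) (3*n+1)).submatrix e e).det
        = L.det * ((Hmat s (3*p) (3*n+1)).submatrix e e).det := by rw [hdL, one_mul]
      _ = T.det := by rw [← det_mul, hstep]
  rw [← det_submatrix_equiv_self e (Hmat s (3*p) (3*n+1)), hsub, hdT]

theorem stmt12 (J : ℂ) (hJ : J = (Complex.I * Real.sqrt 3 - 1) / 2)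
    (c : ℕ → ℂ) (hc0 : c 0 = 1)
    (hc3 : ∀ n, c (3 * n) = c n)
    (hc31 : ∀ n, c (3 * n + 1) = J * c n)
    (hc32 : ∀ n, c (3 * n + 2) = 0)
    (s : ℕ → ℂ) (hs : ∀ n, s n = c n + c (n + 1)) :
    ∀ n p : ℕ, 1 ≤ n →
      (Hmat s (3 * p) (3 * n)).det =
        (-1) ^ n * (Hmat s p n).det ^ 2 * (Hmat c (p + 1) n).det ∧
      (Hmat s (3 * p) (3 * n + 1)).det =
        (-1) ^ (n + 1) * J ^ 2 * (Hmat c p (n + 1)).det * (Hmat s p n).det *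
          (Hmat s (p + 1) n).det := by
  have hJ2 : J^2 + J + 1 = 0 := by
    have h3 : ((Real.sqrt 3 : ℝ) : ℂ)^2 = 3 := by
      norm_cast
      exact Real.sq_sqrt (by norm_num)
    rw [hJ]
    linear_combination ((Real.sqrt 3 : ℝ) : ℂ)^2/4 * Complex.I_sq - (1/4) * h3
  have hJ3 : J^3 = 1 := by linear_combination (J - 1) * hJ2
  have hs0 : ∀ k, s (3*k) = (1+J) * c k := by
    intro k; rw [hs, hc3, hc31]; ring
  have hs1 : ∀ k, s (3*k+1) = J * c k := by
    intro k; rw [hs, hc31, show 3*k+1+1 = 3*k+2 by ring, hc32]; ring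
  have hs2 : ∀ k, s (3*k+2) = c (k+1) := by
    intro k; rw [hs, hc32, show 3*k+2+1 = 3*(k+1) by ring, hc3]; ring
  intro n p _
  exact ⟨key1 J hJ2 hJ3 c s hs hs0 hs1 hs2 n p,
    key2 J hJ2 hJ3 c s hs hs0 hs1 hs2 n p⟩
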